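/- Let g be a Lie algebra and R: g → g a Rota-Baxter operator of weight 1, i.e. [R(x),R(y)] = R([R(x),y] + [x,R(y)] + [x,y]) for all x,y ∈ g. Then (g, [·,·], ▷) with x▷y := [R(x),y] is a post-Lie algebra. -/
import Mathlib

/-- A Rota-Baxter operator of weight 1 on a Lie algebra g induces a post-Lie algebra
structure on g via x ▷ y = [R x, y]. -/
theorem rotaBaxter_weightOne_inducesPostLie {K : Type*} [Field K] [CharZero K]
    {g : Type*} [LieRing g] [LieAlgebra K g]
    (R : g →ₗ[K] g)
    (hR : ∀ x y : g, ⁅R x, R y⁆ = R (⁅R x, y⁆ + ⁅x, R y⁆ + ⁅x, y⁆)) :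
    (∀ x y z : g, ⁅R x, ⁅y, z⁆⁆ = ⁅⁅R x, y⁆, z⁆ + ⁅y, ⁅R x, z⁆⁆) ∧
    (∀ x y z : g, ⁅R ⁅x, y⁆, z⁆ =
      ⁅R x, ⁅R y, z⁆⁆ - ⁅R ⁅R x, y⁆, z⁆ - ⁅R y, ⁅R x, z⁆⁆ + ⁅R ⁅R y, x⁆, z⁆) := by
  constructor
  · intro x y z
    rw [leibniz_lie]
  · intro x y z
    have h : R ⁅x, y⁆ = ⁅R x, R y⁆ - R ⁅R x, y⁆ + R ⁅R y, x⁆ := by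
      rw [hR x y, map_add, map_add, ← lie_skew (R y) x, map_neg]
      abel
    rw [h]
    simp [lie_lie]
    abel
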